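/- Let n ≥ 4 be an even integer. Let f be a normalized analytic function on 𝔻 such that Re( f(z)/z ) > 0 for all z ∈ 𝔻 \ {0}. Then for every z with 0 < |z| < ( √(2(1+n²)) − (n+1) ) / (n−1), one has z f'(z)/f(z) ∈ Ω_{nL}. (This is the S*_{nL}-radius of the class W.) -/

import Mathlib

open Complex Metric Set

/-- The function φ_{nL}(z) = 1 + n z/(n+1) + z^n/(n+1). -/
noncomputable def phinL (n : ℕ) (z : ℂ) : ℂ :=
  1 + (n : ℂ) * z / ((n : ℂ) + 1) + z ^ n / ((n : ℂ) + 1)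

/-- Ω_{nL} = φ_{nL}(𝔻), the image of the open unit disk. -/
def OmeganL (n : ℕ) : Set ℂ := phinL n '' ball (0 : ℂ) 1

/-- f is analytic on the unit disk with f(0) = 0 and f'(0) = 1. -/
def IsNormalizedAnalytic (f : ℂ → ℂ) : Prop :=
  AnalyticOnNhd ℂ f (ball (0 : ℂ) 1) ∧ f 0 = 0 ∧ deriv f 0 = 1

/-- p is subordinate to ψ on the unit disk. -/
def Subord (p ψ : ℂ → ℂ) : Prop :=
  ∃ ω : ℂ → ℂ, AnalyticOnNhd ℂ ω (ball (0 : ℂ) 1) ∧ ω 0 = 0 ∧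
    (∀ z ∈ ball (0 : ℂ) 1, ω z ∈ ball (0 : ℂ) 1) ∧
    (∀ z ∈ ball (0 : ℂ) 1, p z = ψ (ω z))

/-- Membership in the class S*_{nL}. -/
def MemSnL (n : ℕ) (f : ℂ → ℂ) : Prop :=
  IsNormalizedAnalytic f ∧ (∀ z ∈ ball (0 : ℂ) 1, z ≠ 0 → f z ≠ 0) ∧
  Subord (fun z => if z = 0 then 1 else z * deriv f z / f z) (phinL n)


lemma quad_aux (n : ℕ) (hn : 4 ≤ n) (r : ℝ) (hr0 : 0 ≤ r)
    (hr : r < (Real.sqrt (2 * (1 + (n : ℝ) ^ 2)) - ((n : ℝ) + 1)) / ((n : ℝ) - 1)) :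
    2 * r * ((n : ℝ) + 1) < ((n : ℝ) - 1) * (1 - r ^ 2) ∧ r < 1 := by
  have hn' : (4 : ℝ) ≤ (n : ℝ) := by exact_mod_cast hn
  set s := Real.sqrt (2 * (1 + (n : ℝ) ^ 2)) with hs
  have hs0 : 0 ≤ s := Real.sqrt_nonneg _
  have hs2 : s ^ 2 = 2 * (1 + (n : ℝ) ^ 2) := Real.sq_sqrt (by positivity)
  have hden : (0 : ℝ) < (n : ℝ) - 1 := by linarith
  have h1 : r * ((n : ℝ) - 1) < s - ((n : ℝ) + 1) := by
    rw [div_eq_mul_inv] at hr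
    calc r * ((n:ℝ)-1) < (s - ((n:ℝ)+1)) * ((n:ℝ)-1)⁻¹ * ((n:ℝ)-1) := by
          exact mul_lt_mul_of_pos_right hr hden
      _ = s - ((n:ℝ)+1) := by field_simp
  have hsq : (r * ((n : ℝ) - 1) + ((n : ℝ) + 1)) ^ 2 < s ^ 2 := by
    have hb : 0 ≤ r * ((n : ℝ) - 1) + ((n : ℝ) + 1) := by nlinarith
    nlinarith
  constructor
  · nlinarith
  · by_contra hc
    push_neg at hc
    have h2 : 2 * (n : ℝ) ≤ r * ((n : ℝ) - 1) + ((n : ℝ) + 1) := by nlinarith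
    have h3 : (2 * (n : ℝ)) ^ 2 ≤ (r * ((n : ℝ) - 1) + ((n : ℝ) + 1)) ^ 2 := by
      apply pow_le_pow_left₀ (by positivity) h2
    nlinarith

lemma exists_root (n : ℕ) (hn : 4 ≤ n) (d : ℂ) (hd : ‖d‖ < (n : ℝ) - 1) :
    ∃ z : ℂ, ‖z‖ < 1 ∧ (n : ℂ) * z + z ^ n = d := by
  have hn' : (4 : ℝ) ≤ (n : ℝ) := by exact_mod_cast hn
  have hd0 : 0 ≤ ‖d‖ := norm_nonneg d
  set t : ℝ := ‖d‖ / ((n : ℝ) - 1) with ht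
  have htn : (0:ℝ) < (n:ℝ) - 1 := by linarith
  have ht0 : 0 ≤ t := by positivity
  have ht1 : t < 1 := by rw [ht, div_lt_one htn]; exact hd
  set ρ : ℝ := (1 + t) / 2 with hρ
  have hρ0 : 0 < ρ := by positivity
  have hρ1 : ρ < 1 := by rw [hρ]; linarith
  have htρ : t ≤ ρ := by rw [hρ]; linarith
  -- the bound |d| ≤ n ρ - ρ
  have hkey : ‖d‖ ≤ (n : ℝ) * ρ - ρ := by
    have : ‖d‖ = t * ((n:ℝ) - 1) := by rw [ht]; field_simp
    rw [this]; nlinarith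
  set α := closedBall (0 : ℂ) ρ
  haveI : Nonempty α := ⟨⟨0, by simp [α, hρ0.le]⟩⟩
  haveI : CompleteSpace α := (Metric.isClosed_closedBall (x := (0:ℂ)) (ε := ρ)).completeSpace_coe
  have hmem : ∀ z : α, (d - (z : ℂ) ^ n) / n ∈ α := by
    rintro ⟨z, hz⟩
    simp only [α, mem_closedBall, dist_zero_right] at hz ⊢
    have hzρ : ‖z‖ ≤ ρ := by simpa using hz
    have hzn : ‖z ^ n‖ ≤ ρ ^ n := by
      rw [norm_pow]; exact pow_le_pow_left₀ (norm_nonneg z) hzρ n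
    have hρn : ρ ^ n ≤ ρ := by
      calc ρ ^ n ≤ ρ ^ 1 := pow_le_pow_of_le_one hρ0.le hρ1.le (by omega)
        _ = ρ := pow_one ρ
    have hnum : ‖d - z ^ n‖ ≤ (n : ℝ) * ρ := by
      calc ‖d - z ^ n‖ ≤ ‖d‖ + ‖z ^ n‖ :=
            norm_sub_le d (z ^ n)
        _ ≤ ((n : ℝ) * ρ - ρ) + ρ ^ n := add_le_add hkey hzn
        _ ≤ (n : ℝ) * ρ := by linarith
    rw [norm_div]
    have hnpos : (0:ℝ) < (n:ℝ) := by linarith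
    have : ‖(n : ℂ)‖ = (n : ℝ) := by simp
    rw [this]
    rw [div_le_iff₀ hnpos]
    calc ‖d - z ^ n‖ = ‖d - z^n‖ := rfl
      _ ≤ (n:ℝ) * ρ := hnum
      _ = ρ * (n:ℝ) := mul_comm _ _
  set T : α → α := fun z => ⟨(d - (z : ℂ) ^ n) / n, hmem z⟩ with hT
  have hnc : ((n : ℂ)) ≠ 0 := Nat.cast_ne_zero.mpr (by omega)
  have hlip : LipschitzWith (⟨ρ, hρ0.le⟩ : NNReal) T := by
    apply LipschitzWith.of_dist_le_mul
    rintro ⟨z, hz⟩ ⟨w, hw⟩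
    simp only [α, mem_closedBall, dist_zero_right] at hz hw
    have hzρ : ‖z‖ ≤ ρ := by simpa using hz
    have hwρ : ‖w‖ ≤ ρ := by simpa using hw
    have hdist : dist (T ⟨z, by simpa [α] using hz⟩) (T ⟨w, by simpa [α] using hw⟩)
        = ‖z ^ n - w ^ n‖ / (n : ℝ) := by
      rw [Subtype.dist_eq]
      simp only [hT]
      rw [dist_eq_norm]
      have : (d - z ^ n) / n - (d - w ^ n) / n = (w ^ n - z ^ n) / n := by ring
      rw [this, norm_div, Complex.norm_natCast, norm_sub_rev]
    have hfact : z ^ n - w ^ n = (∑ i ∈ Finset.range n, z ^ i * w ^ (n - 1 - i)) * (z - w) :=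
      (geom_sum₂_mul z w n).symm
    have hsum : ‖∑ i ∈ Finset.range n, z ^ i * w ^ (n - 1 - i)‖
        ≤ (n : ℝ) * ρ ^ (n - 1) := by
      calc ‖∑ i ∈ Finset.range n, z ^ i * w ^ (n - 1 - i)‖
          ≤ ∑ i ∈ Finset.range n, ‖z ^ i * w ^ (n - 1 - i)‖ :=
            norm_sum_le _ _
        _ ≤ ∑ _i ∈ Finset.range n, ρ ^ (n - 1) := by
            apply Finset.sum_le_sum
            intro i hi
            rw [Finset.mem_range] at hi
            rw [norm_mul, norm_pow, norm_pow]
            have h1 : ‖z‖ ^ i ≤ ρ ^ i :=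
              pow_le_pow_left₀ (norm_nonneg z) hzρ i
            have h2 : ‖w‖ ^ (n - 1 - i) ≤ ρ ^ (n - 1 - i) :=
              pow_le_pow_left₀ (norm_nonneg w) hwρ _
            calc ‖z‖ ^ i * ‖w‖ ^ (n - 1 - i)
                ≤ ρ ^ i * ρ ^ (n - 1 - i) := by
                  apply mul_le_mul h1 h2 (by positivity) (by positivity)
              _ = ρ ^ (n - 1) := by rw [← pow_add]; congr 1; omega
        _ = (n : ℝ) * ρ ^ (n - 1) := by
            rw [Finset.sum_const, Finset.card_range, nsmul_eq_mul]
    have hρpow : ρ ^ (n - 1) ≤ ρ := by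
      calc ρ ^ (n - 1) ≤ ρ ^ 1 := pow_le_pow_of_le_one hρ0.le hρ1.le (by omega)
        _ = ρ := pow_one ρ
    rw [hdist, hfact, norm_mul]
    have hnpos : (0:ℝ) < (n:ℝ) := by linarith
    rw [div_le_iff₀ hnpos]
    have hcoe : ((⟨ρ, hρ0.le⟩ : NNReal) : ℝ) = ρ := rfl
    calc ‖∑ i ∈ Finset.range n, z ^ i * w ^ (n - 1 - i)‖ * ‖z - w‖
        ≤ ((n : ℝ) * ρ ^ (n - 1)) * ‖z - w‖ := by
          apply mul_le_mul_of_nonneg_right hsum (norm_nonneg _)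
      _ ≤ ((n : ℝ) * ρ) * ‖z - w‖ := by
          apply mul_le_mul_of_nonneg_right _ (norm_nonneg _)
          exact mul_le_mul_of_nonneg_left hρpow hnpos.le
      _ = (⟨ρ, hρ0.le⟩ : NNReal) * dist (⟨z, by simpa [α] using hz⟩ : α) ⟨w, by simpa [α] using hw⟩ * n := by
          rw [Subtype.dist_eq, dist_eq_norm, hcoe]
          ring
  have hcontr : ContractingWith (⟨ρ, hρ0.le⟩ : NNReal) T := by
    constructor
    · exact_mod_cast hρ1
    · exact hlip
  obtain ⟨x, hx⟩ := hcontr.exists_fixedPoint ⟨0, by simp [α, hρ0.le]⟩ (by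
    apply edist_ne_top)
  have hfix : T x = x := hx.1
  have hxval : (d - (x : ℂ) ^ n) / n = (x : ℂ) := by
    have := congrArg (Subtype.val) hfix
    simpa [hT] using this
  refine ⟨(x : ℂ), ?_, ?_⟩
  · have : (x : ℂ) ∈ closedBall (0:ℂ) ρ := x.2
    rw [mem_closedBall, dist_zero_right] at this
    calc ‖(x:ℂ)‖ = ‖(x:ℂ)‖ := rfl
      _ ≤ ρ := this
      _ < 1 := hρ1
  · field_simp at hxval
    linear_combination -hxval

lemma mobius_mapsTo (a : ℂ) (ha : a ∈ ball (0:ℂ) 1) :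
    ∀ z ∈ ball (0:ℂ) 1, (z + a) / (1 + (starRingEnd ℂ) a * z) ∈ ball (0:ℂ) 1 := by
  intro z hz
  rw [mem_ball_zero_iff] at ha hz ⊢
  have hden : 1 + (starRingEnd ℂ) a * z ≠ 0 := by
    intro h
    have : ‖(starRingEnd ℂ) a * z‖ < 1 := by
      rw [norm_mul, Complex.norm_conj]
      calc ‖a‖ * ‖z‖ ≤ 1 * ‖z‖ := mul_le_mul_of_nonneg_right ha.le (norm_nonneg z)
        _ = ‖z‖ := one_mul _
        _ < 1 := hz
    have h2 : (starRingEnd ℂ) a * z = -1 := by linear_combination h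
    rw [h2] at this
    simp at this
  have hkey : normSq (z + a) < normSq (1 + (starRingEnd ℂ) a * z) := by
    have hid : normSq (1 + (starRingEnd ℂ) a * z) - normSq (z + a)
        = (1 - normSq a) * (1 - normSq z) := by
      simp only [normSq_apply, Complex.add_re, Complex.add_im, Complex.one_re, Complex.one_im,
        Complex.mul_re, Complex.mul_im, Complex.conj_re, Complex.conj_im]
      ring
    have h1 : 0 < 1 - normSq a := by
      rw [← Complex.sq_norm]
      have := norm_nonneg a
      nlinarith
    have h2 : 0 < 1 - normSq z := by
      rw [← Complex.sq_norm]
      have := norm_nonneg z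
      nlinarith
    nlinarith
  rw [norm_div]
  rw [div_lt_one (norm_pos_iff.mpr hden)]
  have h1 : ‖z + a‖ ^ 2 < ‖1 + (starRingEnd ℂ) a * z‖ ^ 2 := by
    rw [Complex.sq_norm, Complex.sq_norm]
    exact hkey
  nlinarith [norm_nonneg (z + a), norm_nonneg (1 + (starRingEnd ℂ) a * z)]

lemma caratheodory_bound (p : ℂ → ℂ)
    (hd : DifferentiableOn ℂ p (ball (0:ℂ) 1))
    (hp : ∀ z ∈ ball (0:ℂ) 1, 0 < (p z).re)
    (a : ℂ) (ha : a ∈ ball (0:ℂ) 1) :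
    ‖deriv p a‖ * (1 - ‖a‖ ^ 2) ≤ 2 * (p a).re := by
  set σ : ℂ → ℂ := fun z => (z + a) / (1 + (starRingEnd ℂ) a * z) with hσ
  have hden : ∀ z ∈ ball (0:ℂ) 1, 1 + (starRingEnd ℂ) a * z ≠ 0 := by
    intro z hz h
    rw [mem_ball_zero_iff] at hz
    have ha' := mem_ball_zero_iff.mp ha
    have : ‖(starRingEnd ℂ) a * z‖ < 1 := by
      rw [norm_mul, Complex.norm_conj]
      calc ‖a‖ * ‖z‖ ≤ 1 * ‖z‖ := mul_le_mul_of_nonneg_right ha'.le (norm_nonneg z)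
        _ = ‖z‖ := one_mul _
        _ < 1 := hz
    have h2 : (starRingEnd ℂ) a * z = -1 := by linear_combination h
    rw [h2] at this
    simp at this
  have hσmaps : ∀ z ∈ ball (0:ℂ) 1, σ z ∈ ball (0:ℂ) 1 := mobius_mapsTo a ha
  have hσ0 : σ 0 = a := by simp [hσ]
  set c : ℂ := p a with hc
  have hcre : 0 < c.re := hp a ha
  set q : ℂ → ℂ := fun z => (p (σ z) - c) / (p (σ z) + (starRingEnd ℂ) c) with hq
  have hqden : ∀ z ∈ ball (0:ℂ) 1, p (σ z) + (starRingEnd ℂ) c ≠ 0 := by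
    intro z hz h
    have h1 : 0 < (p (σ z)).re := hp _ (hσmaps z hz)
    have : (p (σ z) + (starRingEnd ℂ) c).re = (p (σ z)).re + c.re := by
      simp [Complex.add_re, Complex.conj_re]
    rw [h] at this
    simp at this
    linarith
  have hσdiff : DifferentiableOn ℂ σ (ball (0:ℂ) 1) := by
    apply DifferentiableOn.div
    · exact (differentiable_id.add_const a).differentiableOn
    · exact ((differentiable_id.const_mul _).const_add 1).differentiableOn
    · exact hden
  have hqdiff : DifferentiableOn ℂ q (ball (0:ℂ) 1) := by
    have hPd : DifferentiableOn ℂ (fun z => p (σ z)) (ball (0:ℂ) 1) :=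
      hd.comp hσdiff hσmaps
    exact (hPd.sub_const c).div (hPd.add_const _) hqden
  have hq0 : q 0 = 0 := by
    simp only [hq, hσ0]
    simp [← hc]
  have hqmaps : MapsTo q (ball (0:ℂ) 1) (ball (q 0) 1) := by
    rw [hq0]
    intro z hz
    rw [mem_ball_zero_iff]
    set P := p (σ z) with hP
    have hPre : 0 < P.re := hp _ (hσmaps z hz)
    have hkey : normSq (P - c) < normSq (P + (starRingEnd ℂ) c) := by
      have hid : normSq (P + (starRingEnd ℂ) c) - normSq (P - c) = 4 * P.re * c.re := by
        simp only [normSq_apply, Complex.add_re, Complex.add_im, Complex.sub_re, Complex.sub_im,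
          Complex.conj_re, Complex.conj_im]
        ring
      nlinarith
    rw [hq, norm_div, div_lt_one (norm_pos_iff.mpr (hqden z hz))]
    have h1 : ‖P - c‖ ^ 2 < ‖P + (starRingEnd ℂ) c‖ ^ 2 := by
      rw [Complex.sq_norm, Complex.sq_norm]
      exact hkey
    nlinarith [norm_nonneg (P - c), norm_nonneg (P + (starRingEnd ℂ) c)]
  -- derivative computations
  have hσderiv : HasDerivAt σ (1 - (starRingEnd ℂ) a * a) 0 := by
    have h1 : HasDerivAt (fun z : ℂ => z + a) 1 0 := (hasDerivAt_id 0).add_const a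
    have h2 : HasDerivAt (fun z : ℂ => 1 + (starRingEnd ℂ) a * z) ((starRingEnd ℂ) a) 0 := by
      simpa using ((hasDerivAt_id 0).const_mul ((starRingEnd ℂ) a)).const_add 1
    have h3 := h1.div h2 (by simpa using hden 0 (mem_ball_self one_pos))
    refine h3.congr_deriv ?_
    simp [mul_comm]
  have hpa : DifferentiableAt ℂ p a := hd.differentiableAt (isOpen_ball.mem_nhds ha)
  have hP : HasDerivAt (fun z => p (σ z)) (deriv p a * (1 - (starRingEnd ℂ) a * a)) 0 := by
    have hpa' : HasDerivAt p (deriv p a) (σ 0) := by rw [hσ0]; exact hpa.hasDerivAt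
    exact hpa'.comp 0 hσderiv
  have hcsum : c + (starRingEnd ℂ) c ≠ 0 := by
    intro h
    have := congrArg Complex.re h
    simp only [Complex.add_re, Complex.conj_re, Complex.zero_re] at this
    linarith
  have hqderiv : HasDerivAt q (deriv p a * (1 - (starRingEnd ℂ) a * a) / (c + (starRingEnd ℂ) c)) 0 := by
    have hden0 : p (σ 0) + (starRingEnd ℂ) c ≠ 0 := by
      rw [hσ0, ← hc]; exact hcsum
    have h4 := (hP.sub_const c).div (hP.add_const ((starRingEnd ℂ) c)) hden0
    refine h4.congr_deriv ?_
    rw [hσ0, ← hc]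
    field_simp
    ring
  have hschwarz := Complex.norm_deriv_le_div_of_mapsTo_ball hqdiff (hqmaps.mono_right ball_subset_closedBall) one_pos
  rw [hqderiv.deriv, norm_div, norm_mul] at hschwarz
  have habs1 : ‖1 - (starRingEnd ℂ) a * a‖ = 1 - ‖a‖ ^ 2 := by
    have he : (starRingEnd ℂ) a * a = ((‖a‖ ^ 2 : ℝ) : ℂ) := by
      rw [mul_comm, Complex.mul_conj]
      norm_cast
      rw [Complex.sq_norm]
    rw [he, ← Complex.ofReal_one, ← Complex.ofReal_sub, Complex.norm_real, Real.norm_eq_abs]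
    have ha' := mem_ball_zero_iff.mp ha
    exact _root_.abs_of_nonneg (by nlinarith [norm_nonneg a])
  have habs2 : ‖c + (starRingEnd ℂ) c‖ = 2 * c.re := by
    rw [Complex.add_conj, Complex.norm_real, Real.norm_eq_abs, _root_.abs_of_nonneg (by linarith)]
  rw [habs1, habs2] at hschwarz
  norm_num at hschwarz
  rw [div_le_one (by linarith)] at hschwarz
  exact hschwarz

theorem stmt13 (n : ℕ) (hn : 4 ≤ n) (hne : Even n)
    (f : ℂ → ℂ) (hf : IsNormalizedAnalytic f)
    (hre : ∀ z ∈ ball (0 : ℂ) 1, z ≠ 0 → 0 < (f z / z).re) :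
    ∀ z : ℂ, 0 < ‖z‖ →
      ‖z‖ < (Real.sqrt (2 * (1 + (n : ℝ) ^ 2)) - ((n : ℝ) + 1)) / ((n : ℝ) - 1) →
      z * deriv f z / f z ∈ OmeganL n := by
  obtain ⟨hfa, hf0, hf1⟩ := hf
  intro z hz0 hzR
  obtain ⟨hquad, hr1⟩ := quad_aux n hn (‖z‖) (norm_nonneg z) hzR
  have hz1 : z ∈ ball (0 : ℂ) 1 := mem_ball_zero_iff.mpr (by assumption)
  have hzne : z ≠ 0 := by
    intro h; rw [h] at hz0; simp at hz0
  -- the function p = dslope f 0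
  set p : ℂ → ℂ := dslope f 0 with hp
  have hpval : ∀ w : ℂ, w ≠ 0 → p w = f w / w := by
    intro w hw
    rw [hp, dslope_of_ne f hw, slope_def_field]
    simp [hf0, div_eq_mul_inv, mul_comm]
  have hp0 : p 0 = 1 := by rw [hp, dslope_same, hf1]
  have hppos : ∀ w ∈ ball (0:ℂ) 1, 0 < (p w).re := by
    intro w hw
    by_cases h : w = 0
    · rw [h, hp0]; norm_num
    · rw [hpval w h]; exact hre w hw h
  have hpd : DifferentiableOn ℂ p (ball (0:ℂ) 1) := by
    intro b hb
    by_cases h : b = 0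
    · subst h
      obtain ⟨ps, hps⟩ := hfa 0 (mem_ball_self one_pos)
      exact (hps.has_fpower_series_dslope_fslope.differentiableAt).differentiableWithinAt
    · exact ((differentiableAt_dslope_of_ne h).mpr
        ((hfa b hb).differentiableAt)).differentiableWithinAt
  -- deriv p at z
  have hfz : f z ≠ 0 := by
    intro h
    have := hre z hz1 hzne
    rw [h] at this
    simp at this
  have hfd : DifferentiableAt ℂ f z := (hfa z hz1).differentiableAt
  have hderiv : deriv p z = (deriv f z * z - f z) / z ^ 2 := by
    have hev : p =ᶠ[nhds z] fun w => f w / w := by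
      filter_upwards [isOpen_ne.mem_nhds hzne] with w hw
      exact hpval w hw
    rw [hev.deriv_eq]
    rw [deriv_fun_div (d := fun w => w) hfd differentiableAt_id hzne]
    simp
  have hpz : p z = f z / z := hpval z hzne
  have hpzne : p z ≠ 0 := by
    rw [hpz]
    exact div_ne_zero hfz hzne
  -- the key bound
  have hbound := caratheodory_bound p hpd hppos z hz1
  set w : ℂ := z * deriv f z / f z with hw
  have hwm1 : w - 1 = z * deriv p z / p z := by
    rw [hderiv, hpz, hw]
    field_simp
  set r : ℝ := ‖z‖ with hr
  have hrpos : 0 < r := hz0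
  have hr2 : 0 < 1 - r ^ 2 := by nlinarith
  have habs : ‖w - 1‖ * (1 - r ^ 2) ≤ 2 * r := by
    rw [hwm1, norm_div, norm_mul]
    have hrele : (p z).re ≤ ‖p z‖ := Complex.re_le_norm _
    have hpabs : 0 < ‖p z‖ := norm_pos_iff.mpr hpzne
    rw [div_mul_eq_mul_div, div_le_iff₀ hpabs]
    calc ‖z‖ * ‖deriv p z‖ * (1 - r ^ 2)
        = r * (‖deriv p z‖ * (1 - r ^ 2)) := by rw [← hr]; ring
      _ ≤ r * (2 * (p z).re) := by
          apply mul_le_mul_of_nonneg_left hbound hrpos.le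
      _ ≤ r * (2 * ‖p z‖) := by
          apply mul_le_mul_of_nonneg_left _ hrpos.le
          linarith
      _ = 2 * r * ‖p z‖ := by ring
  -- conclude |w - 1| * (n+1) < n - 1
  have hn' : (4:ℝ) ≤ (n:ℝ) := by exact_mod_cast hn
  have hfinal : ‖w - 1‖ * ((n:ℝ) + 1) < (n:ℝ) - 1 := by
    have h1 : ‖w - 1‖ * (1 - r ^ 2) * ((n:ℝ)+1) ≤ 2 * r * ((n:ℝ)+1) := by
      apply mul_le_mul_of_nonneg_right habs (by linarith)
    have h2 : ‖w - 1‖ * ((n:ℝ)+1) * (1 - r^2) < ((n:ℝ) - 1) * (1 - r^2) := by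
      calc ‖w - 1‖ * ((n:ℝ)+1) * (1 - r^2)
          = ‖w - 1‖ * (1 - r ^ 2) * ((n:ℝ)+1) := by ring
        _ ≤ 2 * r * ((n:ℝ)+1) := h1
        _ < ((n:ℝ) - 1) * (1 - r^2) := hquad
    exact lt_of_mul_lt_mul_right (by linarith [h2]) hr2.le
  -- find the preimage point
  set d : ℂ := ((n:ℂ) + 1) * (w - 1) with hd
  have hdabs : ‖d‖ < (n:ℝ) - 1 := by
    rw [hd, norm_mul]
    have : ‖(n:ℂ) + 1‖ = (n:ℝ) + 1 := by
      rw [show ((n:ℂ) + 1) = (((n:ℝ) + 1 : ℝ) : ℂ) by push_cast; ring,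
        Complex.norm_real, Real.norm_eq_abs, _root_.abs_of_nonneg (by linarith)]
    rw [this]
    calc ((n:ℝ)+1) * ‖w-1‖ = ‖w-1‖ * ((n:ℝ)+1) := mul_comm _ _
      _ < (n:ℝ) - 1 := hfinal
  obtain ⟨z₀, hz₀1, hz₀eq⟩ := exists_root n hn d hdabs
  refine ⟨z₀, mem_ball_zero_iff.mpr (by assumption), ?_⟩
  have hn1 : ((n:ℂ) + 1) ≠ 0 := by
    intro h
    have := congrArg Complex.re h
    simp only [Complex.add_re, Complex.natCast_re, Complex.one_re, Complex.zero_re] at this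
    linarith [show (4:ℝ) ≤ (n:ℝ) by exact_mod_cast hn]
  rw [phinL]
  rw [hd] at hz₀eq
  field_simp at hz₀eq ⊢
  linear_combination hz₀eq
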